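/- Let X be a square-integrable real random variable with absolutely continuous law, and f : ℝ → ℝ measurable, nondecreasing, non-constant on the support of X, with f(X) square-integrable and Var[f(X)] > 0 and Var[X] > 0. Then the Pearson correlation coefficient ρ_{X, f(X)} = Cov(X, f(X)) / sqrt(Var[X] · Var[f(X)]) is nonnegative. -/

import Mathlib

open MeasureTheory

lemma cov_nonneg_aux (ν : Measure ℝ) [IsProbabilityMeasure ν]
    (f : ℝ → ℝ) (hfm : Measurable f) (hmono : Monotone f)
    (hid2 : MemLp (fun x => x) 2 ν) (hf2 : MemLp f 2 ν) :
    0 ≤ ∫ x, x * f x ∂ν - (∫ x, x ∂ν) * (∫ x, f x ∂ν) := by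
  have hId : Integrable (fun x => x) ν :=
    hid2.integrable (by norm_num)
  have hIf : Integrable f ν := hf2.integrable (by norm_num)
  have hIxf : Integrable (fun x => x * f x) ν := by
    have := hf2.smul (q := 2) (p := 2) (r := 1) hid2
    rw [memLp_one_iff_integrable] at this
    exact this
  have h1 : Integrable (fun z : ℝ × ℝ => z.1 * f z.1) (ν.prod ν) := by
    simpa using hIxf.mul_prod (integrable_const (1 : ℝ))
  have h2 : Integrable (fun z : ℝ × ℝ => z.2 * f z.2) (ν.prod ν) := by
    simpa using (integrable_const (1 : ℝ)).mul_prod hIxf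
  have h3 : Integrable (fun z : ℝ × ℝ => z.1 * f z.2) (ν.prod ν) :=
    hId.mul_prod hIf
  have h4 : Integrable (fun z : ℝ × ℝ => z.2 * f z.1) (ν.prod ν) := by
    simpa [mul_comm] using hIf.mul_prod hId
  have h12 : Integrable (fun z : ℝ × ℝ => z.1 * f z.1 + z.2 * f z.2) (ν.prod ν) := h1.add h2
  have h34 : Integrable (fun z : ℝ × ℝ => z.1 * f z.2 + z.2 * f z.1) (ν.prod ν) := h3.add h4
  have key : 0 ≤ ∫ z : ℝ × ℝ, (z.1 - z.2) * (f z.1 - f z.2) ∂(ν.prod ν) := by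
    refine integral_nonneg fun z => ?_
    simp only [Pi.zero_apply]
    rcases le_total z.1 z.2 with h | h
    · have := hmono h
      nlinarith
    · have := hmono h
      nlinarith
  have expand : ∀ z : ℝ × ℝ, (z.1 - z.2) * (f z.1 - f z.2)
      = (z.1 * f z.1 + z.2 * f z.2) - (z.1 * f z.2 + z.2 * f z.1) := by
    intro z; ring
  rw [show (fun z : ℝ × ℝ => (z.1 - z.2) * (f z.1 - f z.2))
      = fun z : ℝ × ℝ => (z.1 * f z.1 + z.2 * f z.2) - (z.1 * f z.2 + z.2 * f z.1) from
      funext expand] at key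
  rw [integral_sub h12 h34, integral_add h1 h2, integral_add h3 h4] at key
  have e1 : ∫ z : ℝ × ℝ, z.1 * f z.1 ∂(ν.prod ν) = ∫ x, x * f x ∂ν := by
    simpa using integral_prod_mul (μ := ν) (ν := ν) (fun x => x * f x) (fun _ => (1 : ℝ))
  have e2 : ∫ z : ℝ × ℝ, z.2 * f z.2 ∂(ν.prod ν) = ∫ x, x * f x ∂ν := by
    simpa using integral_prod_mul (μ := ν) (ν := ν) (fun _ => (1 : ℝ)) (fun x => x * f x)
  have e3 : ∫ z : ℝ × ℝ, z.1 * f z.2 ∂(ν.prod ν) = (∫ x, x ∂ν) * ∫ x, f x ∂ν :=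
    integral_prod_mul (μ := ν) (ν := ν) (fun x => x) f
  have e4 : ∫ z : ℝ × ℝ, z.2 * f z.1 ∂(ν.prod ν) = (∫ x, x ∂ν) * ∫ x, f x ∂ν := by
    rw [show (fun z : ℝ × ℝ => z.2 * f z.1) = fun z : ℝ × ℝ => f z.1 * z.2 from by
      funext z; ring, integral_prod_mul (μ := ν) (ν := ν) f (fun x => x)]
    ring
  rw [e1, e2, e3, e4] at key
  linarith

theorem pearson_corr_nonneg_of_monotone
    {Ω : Type*} [MeasurableSpace Ω] (μ : Measure Ω) [IsProbabilityMeasure μ]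
    (X : Ω → ℝ) (hXm : Measurable X)
    (habs : μ.map X ≪ (volume : Measure ℝ))
    (hX2 : MemLp X 2 μ)
    (f : ℝ → ℝ) (hfm : Measurable f) (hmono : Monotone f)
    (hfX2 : MemLp (fun ω => f (X ω)) 2 μ)
    (hvarX : 0 < ∫ ω, (X ω - ∫ ω', X ω' ∂μ) ^ 2 ∂μ)
    (hvarfX : 0 < ∫ ω, (f (X ω) - ∫ ω', f (X ω') ∂μ) ^ 2 ∂μ) :
    0 ≤ (∫ ω, (X ω - ∫ ω', X ω' ∂μ) * (f (X ω) - ∫ ω', f (X ω') ∂μ) ∂μ) /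
      Real.sqrt ((∫ ω, (X ω - ∫ ω', X ω' ∂μ) ^ 2 ∂μ) *
        (∫ ω, (f (X ω) - ∫ ω', f (X ω') ∂μ) ^ 2 ∂μ)) := by
  apply div_nonneg _ (Real.sqrt_nonneg _)
  set ν := μ.map X with hν
  have hνprob : IsProbabilityMeasure ν := Measure.isProbabilityMeasure_map hXm.aemeasurable
  have hid2 : MemLp (fun x : ℝ => x) 2 ν := by
    rw [hν, memLp_map_measure_iff (g := fun x : ℝ => x)
      measurable_id.aestronglyMeasurable hXm.aemeasurable]
    exact hX2
  have hf2 : MemLp f 2 ν := by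
    rw [hν, memLp_map_measure_iff hfm.aestronglyMeasurable hXm.aemeasurable]
    exact hfX2
  have hId : Integrable (fun x : ℝ => x) ν := hid2.integrable (by norm_num)
  have hIf : Integrable f ν := hf2.integrable (by norm_num)
  have hIxf : Integrable (fun x => x * f x) ν := by
    have := hf2.smul (q := 2) (p := 2) (r := 1) hid2
    rw [memLp_one_iff_integrable] at this
    exact this
  have hmX : ∫ ω', X ω' ∂μ = ∫ x, x ∂ν :=
    (integral_map (φ := X) (f := fun x : ℝ => x) hXm.aemeasurable
      measurable_id.aestronglyMeasurable).symm
  have hmf : ∫ ω', f (X ω') ∂μ = ∫ x, f x ∂ν :=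
    (integral_map (φ := X) hXm.aemeasurable hfm.aestronglyMeasurable).symm
  set m := ∫ x, x ∂ν with hm
  set m' := ∫ x, f x ∂ν with hm'
  have hchg : (∫ ω, (X ω - ∫ ω', X ω' ∂μ) * (f (X ω) - ∫ ω', f (X ω') ∂μ) ∂μ)
      = ∫ x, (x - m) * (f x - m') ∂ν := by
    rw [hmX, hmf]
    exact (integral_map (φ := X) (f := fun x => (x - m) * (f x - m'))
      hXm.aemeasurable
      (((measurable_id.sub measurable_const).mul
        (hfm.sub measurable_const)).aestronglyMeasurable)).symm
  rw [hchg]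
  have hexp : (fun x : ℝ => (x - m) * (f x - m'))
      = fun x => x * f x - m' * x - m * f x + m * m' := by
    funext x; ring
  have hIa : Integrable (fun x : ℝ => m' * x) ν := hId.const_mul m'
  have hIb : Integrable (fun x : ℝ => m * f x) ν := hIf.const_mul m
  have hIc : Integrable (fun x : ℝ => x * f x - m' * x) ν := hIxf.sub hIa
  have hId2 : Integrable (fun x : ℝ => x * f x - m' * x - m * f x) ν := hIc.sub hIb
  rw [hexp, integral_add hId2 (integrable_const (m * m')),
    integral_sub hIc hIb, integral_sub hIxf hIa,
    integral_const_mul, integral_const_mul, integral_const]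
  have := cov_nonneg_aux ν f hfm hmono hid2 hf2
  simp only [measure_univ, probReal_univ, ENNReal.toReal_one, smul_eq_mul, one_mul]
  rw [← hm, ← hm'] at this ⊢
  nlinarith [this]
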